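/- arXiv:2411.14334 — 2 statements merged into one kernel-verified Lean document; each statement's English description precedes it below -/
import Mathlib

section
/- Let X be a nonnegative real-valued random variable such that its moment generating function g(s) = E[s^X] (for s in (0,1]) admits an expansion g(s) = ∑_{k=0}^n p_k s^k + O(s^{n+1}) as s ↓ 0 for every n, i.e., g is analytic at 0 with nonnegative coefficients summing appropriately. Then X takes values in the nonnegative integers almost surely. -/
open MeasureTheory ENNReal Filter

private lemma meas_ofReal_rpow {Ω : Type*} [MeasurableSpace Ω] {X : Ω → ℝ}
    (hX : Measurable X) {s : ℝ} (hs : 0 < s) (c : ℝ) :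
    Measurable (fun ω => ENNReal.ofReal (s ^ (X ω - c))) := by
  have h : (fun ω => ENNReal.ofReal (s ^ (X ω - c)))
      = fun ω => ENNReal.ofReal (Real.exp (Real.log s * (X ω - c))) := by
    funext ω; rw [Real.rpow_def_of_pos hs]
  rw [h]
  exact ENNReal.measurable_ofReal.comp (Real.measurable_exp.comp
    (measurable_const.mul (hX.sub measurable_const)))

private lemma ennreal_mul_cancel {a b c : ℝ≥0∞} (h0 : a ≠ 0) (ht : a ≠ ⊤)
    (h : a * b = a * c) : b = c := by
  calc b = (a⁻¹ * a) * b := by rw [ENNReal.inv_mul_cancel h0 ht, one_mul]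
    _ = a⁻¹ * (a * c) := by rw [mul_assoc, h]
    _ = (a⁻¹ * a) * c := by rw [mul_assoc]
    _ = c := by rw [ENNReal.inv_mul_cancel h0 ht, one_mul]

private lemma step {Ω : Type*} [MeasurableSpace Ω] (P : Measure Ω) [IsFiniteMeasure P]
    {X : Ω → ℝ} (hX : Measurable X) (q : ℕ → ℝ≥0∞) (hq : ∀ k, q k ≠ ⊤)
    {r' : ℝ} (hr0 : 0 < r') (hr1 : r' ≤ 1) (n : ℕ)
    (hJ : ∀ s ∈ Set.Ioo (0:ℝ) r',
      (∫⁻ ω in {ω | (n:ℝ) ≤ X ω}, ENNReal.ofReal (s ^ (X ω - n)) ∂P)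
        = ∑' k, q (n + k) * (ENNReal.ofReal s) ^ k) :
    P {ω | (n:ℝ) < X ω ∧ X ω < n + 1} = 0 ∧
    ∀ s ∈ Set.Ioo (0:ℝ) r',
      (∫⁻ ω in {ω | (n:ℝ) + 1 ≤ X ω}, ENNReal.ofReal (s ^ (X ω - ((n:ℝ) + 1))) ∂P)
        = ∑' k, q (n + 1 + k) * (ENNReal.ofReal s) ^ k := by
  have hSmeas : MeasurableSet {ω | (n:ℝ) ≤ X ω} := measurableSet_le measurable_const hX
  have hTmeas : MeasurableSet {ω | (n:ℝ) < X ω} := measurableSet_lt measurable_const hX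
  have hEmeas : MeasurableSet {ω | X ω = (n:ℝ)} := by
    have : {ω | X ω = (n:ℝ)} = X ⁻¹' {(n:ℝ)} := rfl
    rw [this]; exact hX (measurableSet_singleton _)
  -- fixed point s₀ and the sequence s_ j → 0
  set s₀ : ℝ := r' / 2 with hs₀def
  have hs₀pos : 0 < s₀ := by positivity
  have hs₀mem : s₀ ∈ Set.Ioo (0:ℝ) r' := ⟨hs₀pos, by simp [hs₀def]; linarith⟩
  set t₀ : ℝ≥0∞ := ENNReal.ofReal s₀ with ht₀def
  have ht₀0 : t₀ ≠ 0 := by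
    simp only [ht₀def, ne_eq, ENNReal.ofReal_eq_zero, not_le]; exact hs₀pos
  have ht₀top : t₀ ≠ ⊤ := ENNReal.ofReal_ne_top
  set sq : ℕ → ℝ := fun j => s₀ / (j + 1) with hsqdef
  have hsqpos : ∀ j, 0 < sq j := by
    intro j; apply div_pos hs₀pos; positivity
  have hsqle : ∀ j, sq j ≤ s₀ := by
    intro j
    exact div_le_self hs₀pos.le (by have := Nat.cast_nonneg (α := ℝ) j; linarith)
  have hsqmem : ∀ j, sq j ∈ Set.Ioo (0:ℝ) r' := fun j =>
    ⟨hsqpos j, lt_of_le_of_lt (hsqle j) hs₀mem.2⟩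
  have hsqtendsto : Filter.Tendsto sq Filter.atTop (nhds 0) := by
    apply Filter.Tendsto.div_atTop (tendsto_const_nhds)
    exact Filter.tendsto_atTop_add_const_right _ 1 tendsto_natCast_atTop_atTop
  -- the integrand is bounded by 1 on the set {n ≤ X}
  have hb : ∀ s ∈ Set.Ioo (0:ℝ) r', ∀ ω, (n:ℝ) ≤ X ω →
      ENNReal.ofReal (s ^ (X ω - n)) ≤ 1 := by
    intro s hs ω hω
    rw [show (1:ℝ≥0∞) = ENNReal.ofReal 1 by simp]
    exact ENNReal.ofReal_le_ofReal
      (Real.rpow_le_one hs.1.le (by linarith [hs.2]) (by linarith))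
  -- the series is finite for s ∈ (0, r')
  have hSfin : ∀ s ∈ Set.Ioo (0:ℝ) r',
      (∑' k, q (n + k) * (ENNReal.ofReal s) ^ k) ≠ ⊤ := by
    intro s hs
    rw [← hJ s hs]
    have h1 : (∫⁻ ω in {ω | (n:ℝ) ≤ X ω}, ENNReal.ofReal (s ^ (X ω - n)) ∂P)
        ≤ ∫⁻ _ω in {ω | (n:ℝ) ≤ X ω}, (1:ℝ≥0∞) ∂P :=
      lintegral_mono_ae (ae_restrict_of_forall_mem hSmeas (fun ω hω => hb s hs ω hω))
    rw [setLIntegral_const] at h1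
    exact ne_top_of_le_ne_top (by simp [measure_ne_top]) h1
  -- the constant C bounding shifted sums
  set C : ℝ≥0∞ := ∑' k, q (n + 1 + k) * t₀ ^ k with hCdef
  have hCfin : C ≠ ⊤ := by
    intro htop
    have h1 : C * t₀ ≤ ∑' k, q (n + k) * t₀ ^ k := by
      rw [hCdef, ← ENNReal.tsum_mul_right]
      have he : ∀ k : ℕ, q (n + 1 + k) * t₀ ^ k * t₀ = q (n + (k+1)) * t₀ ^ (k+1) := by
        intro k; rw [pow_succ, show n + 1 + k = n + (k+1) by ring]; ring
      rw [tsum_congr he]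
      conv_rhs => rw [tsum_eq_zero_add' (f := fun k => q (n + k) * t₀ ^ k) ENNReal.summable]
      exact le_add_self
    rw [htop, ENNReal.top_mul ht₀0] at h1
    exact hSfin s₀ hs₀mem (top_le_iff.mp h1)
  -- shifted sums are bounded by C for s ≤ s₀
  have hshift_le : ∀ s, 0 ≤ s → s ≤ s₀ →
      (∑' k, q (n + 1 + k) * (ENNReal.ofReal s) ^ k) ≤ C := by
    intro s hs0 hs1
    apply ENNReal.tsum_le_tsum
    intro k
    gcongr
    exact ENNReal.ofReal_le_ofReal hs1
  -- splitting off the first term of the series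
  have hsplit_sum : ∀ s : ℝ, (∑' k, q (n + k) * (ENNReal.ofReal s) ^ k)
      = q n + (∑' k, q (n + 1 + k) * (ENNReal.ofReal s) ^ k) * ENNReal.ofReal s := by
    intro s
    rw [tsum_eq_zero_add' (f := fun k => q (n + k) * (ENNReal.ofReal s) ^ k)
      ENNReal.summable]
    simp only [pow_zero, mul_one, Nat.add_zero]
    congr 1
    rw [← ENNReal.tsum_mul_right]
    apply tsum_congr; intro k
    rw [pow_succ, show n + (k+1) = n + 1 + k by ring]; ring
  -- limit of the series side along sq
  have hA_tendsto : Filter.Tendsto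
      (fun j => ∑' k, q (n + k) * (ENNReal.ofReal (sq j)) ^ k)
      Filter.atTop (nhds (q n)) := by
    have h0 : Filter.Tendsto (fun j => ENNReal.ofReal (sq j)) Filter.atTop (nhds 0) := by
      have := ENNReal.tendsto_ofReal hsqtendsto
      simpa using this
    have hup : Filter.Tendsto (fun j => q n + (∑' k, q (n + 1 + k) * t₀ ^ k) * ENNReal.ofReal (sq j))
        Filter.atTop (nhds (q n)) := by
      have h1 : Filter.Tendsto (fun j => (∑' k, q (n + 1 + k) * t₀ ^ k) * ENNReal.ofReal (sq j))
          Filter.atTop (nhds 0) := by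
        have := ENNReal.Tendsto.const_mul (a := C) h0 (Or.inr hCfin)
        simpa using this
      have := h1.const_add (q n)
      simpa using this
    apply tendsto_of_tendsto_of_tendsto_of_le_of_le tendsto_const_nhds hup
    · intro j
      show q n ≤ ∑' k, q (n + k) * (ENNReal.ofReal (sq j)) ^ k
      rw [hsplit_sum]
      exact le_self_add
    · intro j
      show (∑' k, q (n + k) * (ENNReal.ofReal (sq j)) ^ k)
        ≤ q n + (∑' k, q (n + 1 + k) * t₀ ^ k) * ENNReal.ofReal (sq j)
      rw [hsplit_sum]
      exact add_le_add_right (mul_le_mul_left (hshift_le _ (hsqpos j).le (hsqle j)) _) _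
  -- limit of the integral side along sq (dominated convergence)
  have hI_tendsto : Filter.Tendsto
      (fun j => ∫⁻ ω in {ω | (n:ℝ) ≤ X ω}, ENNReal.ofReal (sq j ^ (X ω - n)) ∂P)
      Filter.atTop (nhds (P {ω | X ω = (n:ℝ)})) := by
    have hind : (∫⁻ ω in {ω | (n:ℝ) ≤ X ω},
        Set.indicator {ω | X ω = (n:ℝ)} (fun _ => (1:ℝ≥0∞)) ω ∂P) = P {ω | X ω = (n:ℝ)} := by
      rw [lintegral_indicator hEmeas, setLIntegral_const,
        Measure.restrict_apply hEmeas, one_mul]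
      congr 1
      exact Set.inter_eq_self_of_subset_left (fun ω hω => le_of_eq hω.symm)
    rw [← hind]
    apply tendsto_lintegral_of_dominated_convergence (bound := fun _ => 1)
    · exact fun j => meas_ofReal_rpow hX (hsqpos j) n
    · exact fun j => ae_restrict_of_forall_mem hSmeas (fun ω hω => hb (sq j) (hsqmem j) ω hω)
    · simp [measure_ne_top]
    · apply ae_restrict_of_forall_mem hSmeas
      intro ω hω
      rcases eq_or_lt_of_le (show (n:ℝ) ≤ X ω from hω) with heq | hlt
      · have hXn : X ω = n := heq.symm
        have hmem : ω ∈ {ω | X ω = (n:ℝ)} := hXn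
        rw [Set.indicator_of_mem hmem]
        simp only [hXn, sub_self, Real.rpow_zero, ENNReal.ofReal_one]
        exact tendsto_const_nhds
      · have hne : X ω ≠ n := ne_of_gt hlt
        rw [Set.indicator_of_notMem (by simpa using hne)]
        have hc : 0 < X ω - n := by linarith
        have h1 : Filter.Tendsto (fun j => sq j ^ (X ω - n)) Filter.atTop (nhds 0) := by
          have hca : ContinuousAt (fun x : ℝ => x ^ (X ω - (n:ℝ))) 0 :=
            Real.continuousAt_rpow_const 0 _ (Or.inr hc.le)
          have := hca.tendsto.comp hsqtendsto
          simpa [Function.comp_def, Real.zero_rpow hc.ne'] using this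
        have := ENNReal.tendsto_ofReal h1
        simpa using this
  -- identify q n with the point mass
  have hqn : q n = P {ω | X ω = (n:ℝ)} := by
    apply tendsto_nhds_unique _ hI_tendsto
    have heq : (fun j => ∫⁻ ω in {ω | (n:ℝ) ≤ X ω}, ENNReal.ofReal (sq j ^ (X ω - n)) ∂P)
        = fun j => ∑' k, q (n + k) * (ENNReal.ofReal (sq j)) ^ k :=
      funext fun j => hJ (sq j) (hsqmem j)
    rw [heq]
    exact hA_tendsto
  -- the key identity on {n < X}
  have hK : ∀ s ∈ Set.Ioo (0:ℝ) r',
      (∫⁻ ω in {ω | (n:ℝ) < X ω}, ENNReal.ofReal (s ^ (X ω - ((n:ℝ)+1))) ∂P)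
        = ∑' k, q (n + 1 + k) * (ENNReal.ofReal s) ^ k := by
    intro s hs
    have hspos := hs.1
    have hunion : {ω | (n:ℝ) ≤ X ω} = {ω | X ω = (n:ℝ)} ∪ {ω | (n:ℝ) < X ω} := by
      ext ω
      simp only [Set.mem_setOf_eq, Set.mem_union]
      constructor
      · intro h
        rcases eq_or_lt_of_le h with h | h
        · exact Or.inl h.symm
        · exact Or.inr h
      · rintro (h | h)
        exacts [le_of_eq h.symm, le_of_lt h]
    have hdisj : Disjoint {ω | X ω = (n:ℝ)} {ω | (n:ℝ) < X ω} := by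
      rw [Set.disjoint_left]
      intro ω h1 h2
      exact absurd (h1 : X ω = (n:ℝ)) (ne_of_gt h2)
    have hsplitI : (∫⁻ ω in {ω | (n:ℝ) ≤ X ω}, ENNReal.ofReal (s ^ (X ω - n)) ∂P)
        = q n + ∫⁻ ω in {ω | (n:ℝ) < X ω}, ENNReal.ofReal (s ^ (X ω - n)) ∂P := by
      rw [hunion, lintegral_union hTmeas hdisj]
      congr 1
      have h1 : (∫⁻ ω in {ω | X ω = (n:ℝ)}, ENNReal.ofReal (s ^ (X ω - n)) ∂P)
          = ∫⁻ _ω in {ω | X ω = (n:ℝ)}, (1:ℝ≥0∞) ∂P := by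
        apply setLIntegral_congr_fun hEmeas
        intro ω hω
        have hXn : X ω = (n:ℝ) := hω
        beta_reduce
        rw [hXn]
        simp
      rw [h1, setLIntegral_const, one_mul, ← hqn]
    have hfact : (∫⁻ ω in {ω | (n:ℝ) < X ω}, ENNReal.ofReal (s ^ (X ω - n)) ∂P)
        = (∫⁻ ω in {ω | (n:ℝ) < X ω}, ENNReal.ofReal (s ^ (X ω - ((n:ℝ)+1))) ∂P)
          * ENNReal.ofReal s := by
      rw [← lintegral_mul_const _ (meas_ofReal_rpow hX hspos ((n:ℝ)+1))]
      apply setLIntegral_congr_fun hTmeas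
      intro ω _hω
      have h2 : s ^ (X ω - (n:ℝ)) = s ^ (X ω - ((n:ℝ)+1)) * s := by
        rw [show X ω - (n:ℝ) = (X ω - ((n:ℝ)+1)) + 1 by ring, Real.rpow_add hspos,
          Real.rpow_one]
      beta_reduce
      rw [h2, ENNReal.ofReal_mul (Real.rpow_nonneg hspos.le _)]
    have h1 := hJ s hs
    rw [hsplitI, hfact, hsplit_sum s] at h1
    have h2 := (ENNReal.add_right_inj (hq n)).mp h1
    have ht0 : (ENNReal.ofReal s) ≠ 0 := by
      simp only [ne_eq, ENNReal.ofReal_eq_zero, not_le]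
      exact hspos
    rw [mul_comm _ (ENNReal.ofReal s),
      mul_comm (∑' k, q (n + 1 + k) * (ENNReal.ofReal s) ^ k) (ENNReal.ofReal s)] at h2
    exact ennreal_mul_cancel ht0 ENNReal.ofReal_ne_top h2
  -- the middle set is null
  have hAmeas : MeasurableSet {ω | (n:ℝ) < X ω ∧ X ω < n + 1} :=
    hTmeas.inter (measurableSet_lt hX measurable_const)
  have hnull : P {ω | (n:ℝ) < X ω ∧ X ω < n + 1} = 0 := by
    by_contra hP0
    have hLle : ∀ j, (∫⁻ ω in {ω | (n:ℝ) < X ω},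
        ENNReal.ofReal (sq j ^ (X ω - ((n:ℝ)+1))) ∂P) ≤ C := by
      intro j
      rw [hK (sq j) (hsqmem j)]
      exact hshift_le _ (hsqpos j).le (hsqle j)
    have hfatou := lintegral_liminf_le (μ := P.restrict {ω | (n:ℝ) < X ω}) (u := Filter.atTop)
      (fun j => meas_ofReal_rpow hX (hsqpos j) ((n:ℝ)+1))
    have hliminfC : Filter.liminf (fun j => ∫⁻ ω in {ω | (n:ℝ) < X ω},
        ENNReal.ofReal (sq j ^ (X ω - ((n:ℝ)+1))) ∂P) Filter.atTop ≤ C := by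
      apply le_trans (Filter.liminf_le_liminf (Filter.Eventually.of_forall hLle))
      simp [Filter.liminf_const]
    have htop : ∀ ω ∈ {ω | (n:ℝ) < X ω ∧ X ω < n + 1},
        Filter.liminf (fun j => ENNReal.ofReal (sq j ^ (X ω - ((n:ℝ)+1)))) Filter.atTop
          = ⊤ := by
      intro ω hω
      simp only [Set.mem_setOf_eq] at hω
      have hc : X ω - ((n:ℝ)+1) < 0 := by linarith [hω.2]
      have hcne : ((n:ℝ)+1 - X ω) ≠ 0 := ne_of_gt (by linarith)
      have h1 : Filter.Tendsto (fun j => sq j ^ ((n:ℝ)+1 - X ω)) Filter.atTop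
          (nhds 0) := by
        have hca : ContinuousAt (fun x : ℝ => x ^ ((n:ℝ)+1 - X ω)) 0 :=
          Real.continuousAt_rpow_const 0 _ (Or.inr (by linarith))
        have h := hca.tendsto.comp hsqtendsto
        rw [Function.comp_def] at h
        rw [show (0:ℝ) ^ ((n:ℝ)+1 - X ω) = 0 from Real.zero_rpow hcne] at h
        exact h
      have h2 : Filter.Tendsto (fun j => (sq j ^ ((n:ℝ)+1 - X ω))⁻¹) Filter.atTop
          Filter.atTop := by
        apply Filter.Tendsto.inv_tendsto_nhdsGT_zero
        rw [tendsto_nhdsWithin_iff]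
        exact ⟨h1, Filter.Eventually.of_forall fun j => Real.rpow_pos_of_pos (hsqpos j) _⟩
      have h3 : Filter.Tendsto (fun j => sq j ^ (X ω - ((n:ℝ)+1))) Filter.atTop
          Filter.atTop := by
        have he : ∀ j, sq j ^ (X ω - ((n:ℝ)+1)) = (sq j ^ ((n:ℝ)+1 - X ω))⁻¹ := by
          intro j
          rw [show X ω - ((n:ℝ)+1) = -((n:ℝ)+1 - X ω) by ring, Real.rpow_neg (hsqpos j).le]
        simpa [he] using h2
      have h4 : Filter.Tendsto (fun j => ENNReal.ofReal (sq j ^ (X ω - ((n:ℝ)+1))))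
          Filter.atTop (nhds ⊤) := ENNReal.tendsto_ofReal_atTop.comp h3
      exact h4.liminf_eq
    have h5 : (⊤ : ℝ≥0∞) * P {ω | (n:ℝ) < X ω ∧ X ω < n + 1} ≤ C := by
      calc (⊤ : ℝ≥0∞) * P {ω | (n:ℝ) < X ω ∧ X ω < n + 1}
          = ∫⁻ _ω in {ω | (n:ℝ) < X ω ∧ X ω < n + 1}, (⊤:ℝ≥0∞) ∂P :=
            (setLIntegral_const _ _).symm
        _ ≤ ∫⁻ ω in {ω | (n:ℝ) < X ω ∧ X ω < n + 1},
              Filter.liminf (fun j => ENNReal.ofReal (sq j ^ (X ω - ((n:ℝ)+1))))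
                Filter.atTop ∂P :=
            lintegral_mono_ae (ae_restrict_of_forall_mem hAmeas
              (fun ω hω => le_of_eq (htop ω hω).symm))
        _ ≤ ∫⁻ ω in {ω | (n:ℝ) < X ω},
              Filter.liminf (fun j => ENNReal.ofReal (sq j ^ (X ω - ((n:ℝ)+1))))
                Filter.atTop ∂P :=
            lintegral_mono_set (fun ω hω => hω.1)
        _ ≤ Filter.liminf (fun j => ∫⁻ ω in {ω | (n:ℝ) < X ω},
              ENNReal.ofReal (sq j ^ (X ω - ((n:ℝ)+1))) ∂P) Filter.atTop := hfatou
        _ ≤ C := hliminfC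
    rw [ENNReal.top_mul hP0] at h5
    exact hCfin (top_le_iff.mp h5)
  refine ⟨hnull, ?_⟩
  intro s hs
  have hsplitset : {ω | (n:ℝ) < X ω}
      = {ω | (n:ℝ)+1 ≤ X ω} ∪ {ω | (n:ℝ) < X ω ∧ X ω < n + 1} := by
    ext ω
    simp only [Set.mem_setOf_eq, Set.mem_union]
    constructor
    · intro h
      rcases le_or_gt ((n:ℝ)+1) (X ω) with h1 | h1
      · exact Or.inl h1
      · exact Or.inr ⟨h, h1⟩
    · rintro (h | h)
      · linarith
      · exact h.1
  have hmid0 : (∫⁻ ω in {ω | (n:ℝ) < X ω ∧ X ω < n + 1},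
      ENNReal.ofReal (s ^ (X ω - ((n:ℝ)+1))) ∂P) = 0 := by
    rw [Measure.restrict_eq_zero.mpr hnull]
    exact lintegral_zero_measure _
  have hdisj2 : Disjoint {ω | (n:ℝ)+1 ≤ X ω} {ω | (n:ℝ) < X ω ∧ X ω < n + 1} := by
    rw [Set.disjoint_left]
    intro ω h1 h2
    exact absurd h2.2 (not_lt.mpr h1)
  rw [← hK s hs, hsplitset, lintegral_union hAmeas hdisj2, hmid0, add_zero]

/-- A nonnegative random variable whose moment generating function `g(s) = E[s^X]`
is, near `0`, given by a power series with nonnegative coefficients takes values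
in the nonnegative integers almost surely. -/
theorem stmt_0
    {Ω : Type*} [MeasurableSpace Ω] (P : Measure Ω) [IsProbabilityMeasure P]
    (X : Ω → ℝ) (hXmeas : Measurable X) (hXnonneg : ∀ ω, 0 ≤ X ω)
    (p : ℕ → ℝ) (hp : ∀ k, 0 ≤ p k)
    (r : ℝ) (hr : 0 < r)
    (hser : ∀ s ∈ Set.Ioo (0:ℝ) r, Summable (fun k => p k * s ^ k) ∧
      (∫ ω, s ^ (X ω) ∂P) = ∑' k, p k * s ^ k)
    (hmgf : ∀ s ∈ Set.Ioc (0:ℝ) 1, Integrable (fun ω => s ^ (X ω)) P) :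
    ∀ᵐ ω ∂P, ∃ n : ℕ, X ω = n := by
  have hr'0 : 0 < min r 1 := lt_min hr one_pos
  have hr'1 : min r 1 ≤ 1 := min_le_right r 1
  set q : ℕ → ℝ≥0∞ := fun k => ENNReal.ofReal (p k) with hqdef
  have hq : ∀ k, q k ≠ ⊤ := fun k => ENNReal.ofReal_ne_top
  have hbase : ∀ s ∈ Set.Ioo (0:ℝ) (min r 1),
      (∫⁻ ω in {ω | ((0:ℕ):ℝ) ≤ X ω}, ENNReal.ofReal (s ^ (X ω - ((0:ℕ):ℝ))) ∂P)
        = ∑' k, q (0 + k) * (ENNReal.ofReal s) ^ k := by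
    intro s hs
    have hs01 : s ∈ Set.Ioc (0:ℝ) 1 := ⟨hs.1, le_of_lt (lt_of_lt_of_le hs.2 hr'1)⟩
    have hsr : s ∈ Set.Ioo (0:ℝ) r := ⟨hs.1, lt_of_lt_of_le hs.2 (min_le_left r 1)⟩
    have huniv : {ω | ((0:ℕ):ℝ) ≤ X ω} = Set.univ := by
      ext ω; simpa using hXnonneg ω
    rw [huniv, Measure.restrict_univ]
    have heq1 : (fun ω => ENNReal.ofReal (s ^ (X ω - ((0:ℕ):ℝ))))
        = fun ω => ENNReal.ofReal (s ^ X ω) := by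
      funext ω; norm_num
    rw [heq1]
    rw [← ofReal_integral_eq_lintegral_ofReal (hmgf s hs01)
      (ae_of_all _ (fun ω => Real.rpow_nonneg hs.1.le _))]
    rw [(hser s hsr).2]
    rw [ENNReal.ofReal_tsum_of_nonneg
      (fun k => mul_nonneg (hp k) (pow_nonneg hs.1.le k)) (hser s hsr).1]
    apply tsum_congr
    intro k
    rw [ENNReal.ofReal_mul (hp k), ENNReal.ofReal_pow hs.1.le]
    simp [hqdef]
  have hM : ∀ n : ℕ, ∀ s ∈ Set.Ioo (0:ℝ) (min r 1),
      (∫⁻ ω in {ω | (n:ℝ) ≤ X ω}, ENNReal.ofReal (s ^ (X ω - n)) ∂P)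
        = ∑' k, q (n + k) * (ENNReal.ofReal s) ^ k := by
    intro n
    induction n with
    | zero => exact hbase
    | succ n ih =>
      have h := (step P hXmeas q hq hr'0 hr'1 n ih).2
      intro s hs
      push_cast
      exact h s hs
  have hnull : ∀ n : ℕ, P {ω | (n:ℝ) < X ω ∧ X ω < n + 1} = 0 :=
    fun n => (step P hXmeas q hq hr'0 hr'1 n (hM n)).1
  rw [ae_iff]
  apply measure_mono_null _ (measure_iUnion_null hnull)
  intro ω hω
  simp only [Set.mem_setOf_eq, not_exists] at hω
  refine Set.mem_iUnion.mpr ⟨⌊X ω⌋₊, ⟨?_, ?_⟩⟩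
  · exact lt_of_le_of_ne (Nat.floor_le (hXnonneg ω)) (fun h => hω _ h.symm)
  · exact Nat.lt_floor_add_one (X ω)
end

section
/- Let μ be a finite measure on ℝ^k such that α·μ(A) ∈ ℕ₀ for every bounded Borel set A with μ(∂A) = 0. Then μ is a finite sum of point masses of weight 1/α: there exist n ∈ ℕ₀ and points x^1, …, x^n ∈ ℝ^k with μ = (1/α) ∑_{i=1}^n δ_{x^i}. -/
open MeasureTheory Filter Topology ENNReal NNReal

/-- Auxiliary combinatorial lemma: a finite sum with ℕ-multiplicities can be written
as a plain sum over `Fin n`. -/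
lemma stmt9_aux {β M : Type*} [AddCommMonoid M] (T : Finset β) (m : β → ℕ) (g : β → M) :
    ∃ (n : ℕ) (f : Fin n → β), ∑ i, g (f i) = ∑ x ∈ T, m x • g x := by
  classical
  induction T using Finset.induction_on with
  | empty => exact ⟨0, Fin.elim0, by simp⟩
  | @insert a T' ha ih =>
    obtain ⟨n, f, hf⟩ := ih
    refine ⟨m a + n, Fin.append (fun _ => a) f, ?_⟩
    rw [Fin.sum_univ_add]
    simp only [Fin.append_left, Fin.append_right, hf, Finset.sum_insert ha,
      Finset.sum_const, Finset.card_univ, Fintype.card_fin]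

/-- Key step: for every point, `α·μ{x}` is a natural number and some ball around `x`
carries no mass besides `{x}`. -/
lemma stmt9_key {k : ℕ} (μ : Measure (Fin k → ℝ)) [IsFiniteMeasure μ]
    {α : ℝ} (hα : 0 < α)
    (hnat : ∀ A : Set (Fin k → ℝ), Bornology.IsBounded A → MeasurableSet A →
      μ (frontier A) = 0 → ∃ n : ℕ, α * (μ A).toReal = n) (x : Fin k → ℝ) :
    ∃ m : ℕ, α * (μ {x}).toReal = m ∧ ∃ r > 0, μ (Metric.ball x r) = μ {x} := by
  obtain ⟨rs, rs_lim, rs_prop⟩ := exists_null_frontiers_thickening μ {x}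
  have hball : ∀ n, μ (frontier (Metric.ball x (rs n))) = 0 := by
    intro n
    have := (rs_prop n).2
    rwa [Metric.thickening_singleton] at this
  have hto : Tendsto (fun n => μ (Metric.ball x (rs n))) atTop (𝓝 (μ {x})) := by
    have h1 := tendsto_measure_thickening (μ := μ) (s := ({x} : Set (Fin k → ℝ)))
      ⟨1, one_pos, measure_ne_top μ _⟩
    rw [closure_singleton] at h1
    have h2 : Tendsto rs atTop (𝓝[>] (0:ℝ)) :=
      tendsto_nhdsWithin_of_tendsto_nhds_of_eventually_within rs rs_lim
        (Eventually.of_forall fun n => (rs_prop n).1)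
    have := h1.comp h2
    simpa [Function.comp_def, Metric.thickening_singleton] using this
  have hm : ∀ n, ∃ m : ℕ, α * (μ (Metric.ball x (rs n))).toReal = m := fun n =>
    hnat _ Metric.isBounded_ball measurableSet_ball (hball n)
  choose m hm using hm
  have hreal : Tendsto (fun n => (m n : ℝ)) atTop (𝓝 (α * (μ {x}).toReal)) := by
    have h3 : Tendsto (fun n => (μ (Metric.ball x (rs n))).toReal) atTop
        (𝓝 (μ {x}).toReal) :=
      (ENNReal.tendsto_toReal (measure_ne_top μ _)).comp hto
    have h4 := h3.const_mul α
    simpa only [hm] using h4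
  rw [Metric.tendsto_atTop] at hreal
  obtain ⟨N, hN⟩ := hreal (1/2) (by norm_num)
  have hconst : ∀ n ≥ N, m n = m N := by
    intro n hn
    have h1 := hN n hn
    have h2 := hN N le_rfl
    rw [Real.dist_eq] at h1 h2
    have habs : |(m n : ℝ) - (m N : ℝ)| < 1 := by
      calc |(m n : ℝ) - (m N : ℝ)|
          ≤ |(m n : ℝ) - (α * (μ {x}).toReal)| + |(α * (μ {x}).toReal) - (m N : ℝ)| :=
            abs_sub_le _ _ _
        _ < 1/2 + 1/2 := by rw [abs_sub_comm (α * (μ {x}).toReal)]; exact add_lt_add h1 h2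
        _ = 1 := by norm_num
    have : |(m n : ℤ) - (m N : ℤ)| < 1 := by exact_mod_cast habs
    have := Int.abs_lt_one_iff.mp this
    omega
  have hlim : α * (μ {x}).toReal = m N := by
    have : Tendsto (fun n => (m n : ℝ)) atTop (𝓝 (m N : ℝ)) := by
      apply Tendsto.congr' _ tendsto_const_nhds
      filter_upwards [eventually_ge_atTop N] with n hn
      exact_mod_cast (hconst n hn).symm
    exact tendsto_nhds_unique (Metric.tendsto_atTop.mpr hreal) this
  refine ⟨m N, hlim, rs N, (rs_prop N).1, ?_⟩
  have h5 : α * (μ (Metric.ball x (rs N))).toReal = α * (μ {x}).toReal := by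
    rw [hm N, hlim]
  have h6 : (μ (Metric.ball x (rs N))).toReal = (μ {x}).toReal :=
    mul_left_cancel₀ hα.ne' h5
  exact (ENNReal.toReal_eq_toReal_iff' (measure_ne_top μ _) (measure_ne_top μ _)).mp h6

/-- A finite measure `μ` on `ℝ^k` such that `α·μ(A) ∈ ℕ₀` for every bounded Borel
continuity set `A` is a finite sum of point masses of weight `1/α`. -/
theorem stmt_9
    {k : ℕ} (μ : Measure (Fin k → ℝ)) [IsFiniteMeasure μ]
    (α : ℝ) (hα : 0 < α)
    (hnat : ∀ A : Set (Fin k → ℝ), Bornology.IsBounded A → MeasurableSet A →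
      μ (frontier A) = 0 → ∃ n : ℕ, α * (μ A).toReal = n) :
    ∃ (n : ℕ) (x : Fin n → (Fin k → ℝ)),
      μ = ENNReal.ofReal (1/α) • ∑ i, Measure.dirac (x i) := by
  classical
  obtain ⟨m, hm⟩ : ∃ m : (Fin k → ℝ) → ℕ, ∀ x, α * (μ {x}).toReal = m x ∧
      ∃ r > 0, μ (Metric.ball x r) = μ {x} := by
    choose m h1 h2 using stmt9_key μ hα hnat
    exact ⟨m, fun x => ⟨h1 x, h2 x⟩⟩
  set S : Set (Fin k → ℝ) := {x | μ {x} ≠ 0} with hS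
  -- the complement of the atoms is null
  have hSc : μ Sᶜ = 0 := by
    apply measure_null_of_locally_null
    intro x hx
    obtain ⟨r, hr, hμr⟩ := (hm x).2
    refine ⟨Metric.ball x r, nhdsWithin_le_nhds (Metric.ball_mem_nhds x hr), ?_⟩
    rw [hμr]
    simpa [hS] using hx
  -- each atom has μ{x} = (1/α) * m x
  have hsing : ∀ x, μ {x} = ENNReal.ofReal (1/α) * (m x : ℝ≥0∞) := by
    intro x
    have h1 : (μ {x}).toReal = (1/α) * (m x : ℝ) := by
      have := (hm x).1
      field_simp
      linarith [this]
    calc μ {x} = ENNReal.ofReal ((μ {x}).toReal) :=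
          (ENNReal.ofReal_toReal (measure_ne_top μ _)).symm
      _ = ENNReal.ofReal ((1/α) * (m x : ℝ)) := by rw [h1]
      _ = ENNReal.ofReal (1/α) * ENNReal.ofReal (m x : ℝ) :=
          ENNReal.ofReal_mul (by positivity)
      _ = ENNReal.ofReal (1/α) * (m x : ℝ≥0∞) := by rw [ENNReal.ofReal_natCast]
  -- atoms have mass at least ofReal (1/α)
  have hlow : ∀ x ∈ S, ENNReal.ofReal (1/α) ≤ μ {x} := by
    intro x hx
    rw [hsing x]
    have hmx : 1 ≤ m x := by
      by_contra h
      have hzero : m x = 0 := by omega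
      apply hx
      have h0 : (μ {x}).toReal = 0 := by
        have h2 := (hm x).1
        rw [hzero, Nat.cast_zero] at h2
        exact (mul_eq_zero.mp h2).resolve_left hα.ne'
      exact ((ENNReal.toReal_eq_zero_iff _).mp h0).resolve_right (measure_ne_top μ _)
    calc ENNReal.ofReal (1/α) = ENNReal.ofReal (1/α) * 1 := (mul_one _).symm
      _ ≤ ENNReal.ofReal (1/α) * (m x : ℝ≥0∞) := by
          gcongr
          exact_mod_cast hmx
  have hofpos : (0:ℝ≥0∞) < ENNReal.ofReal (1/α) := ENNReal.ofReal_pos.mpr (by positivity)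
  -- S is finite
  have hSfin : S.Finite := by
    by_contra hinf
    obtain ⟨n0, hn0⟩ := ENNReal.exists_nat_mul_gt hofpos.ne' (measure_ne_top μ Set.univ)
    have hinf' : S.Infinite := hinf
    obtain ⟨T, hTS, hTcard⟩ := hinf'.exists_subset_card_eq n0
    have hTmeas : μ (↑T : Set (Fin k → ℝ)) = ∑ x ∈ T, μ {x} := by
      rw [← Set.biUnion_of_singleton (↑T : Set (Fin k → ℝ))]
      exact measure_biUnion_finset
        (fun x _ y _ hxy => Set.disjoint_singleton.mpr hxy)
        (fun b _ => measurableSet_singleton b)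
    have hbig : (n0 : ℝ≥0∞) * ENNReal.ofReal (1/α) ≤ μ (↑T : Set (Fin k → ℝ)) := by
      rw [hTmeas]
      calc (n0 : ℝ≥0∞) * ENNReal.ofReal (1/α)
          = ∑ _x ∈ T, ENNReal.ofReal (1/α) := by
            rw [Finset.sum_const, hTcard, nsmul_eq_mul]
        _ ≤ ∑ x ∈ T, μ {x} := Finset.sum_le_sum fun x hx => hlow x (hTS hx)
    have := hbig.trans (measure_mono (Set.subset_univ _))
    exact absurd this (not_le.mpr hn0)
  set T : Finset (Fin k → ℝ) := hSfin.toFinset with hT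
  -- μ is the sum of its atoms
  have hdecomp : μ = ∑ x ∈ T, μ {x} • Measure.dirac x := by
    apply Measure.ext
    intro s hs
    have hSm : MeasurableSet S := hSfin.measurableSet
    have h1 : μ s = μ (s ∩ S) := by
      rw [← measure_inter_add_diff s hSm]
      have : μ (s \ S) = 0 :=
        measure_mono_null (fun y hy => hy.2) hSc
      rw [this, add_zero]
    have h2 : s ∩ S = ⋃ x ∈ T.filter (· ∈ s), ({x} : Set (Fin k → ℝ)) := by
      ext y
      simp only [Set.mem_inter_iff, Set.mem_iUnion, Set.mem_singleton_iff,
        Finset.mem_filter, hT, hSfin.mem_toFinset]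
      constructor
      · rintro ⟨hys, hyS⟩; exact ⟨y, ⟨hyS, hys⟩, rfl⟩
      · rintro ⟨x, ⟨hxS, hxs⟩, rfl⟩; exact ⟨hxs, hxS⟩
    have h3 : μ (s ∩ S) = ∑ x ∈ T.filter (· ∈ s), μ {x} := by
      rw [h2]
      exact measure_biUnion_finset
        (fun x _ y _ hxy => Set.disjoint_singleton.mpr hxy)
        (fun b _ => measurableSet_singleton b)
    rw [h1, h3]
    have h4 : (∑ x ∈ T, μ {x} • Measure.dirac x) s
        = ∑ x ∈ T, μ {x} * (Measure.dirac x) s := by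
      rw [Measure.coe_finset_sum, Finset.sum_apply]
      simp [Measure.smul_apply, smul_eq_mul]
    rw [h4]
    rw [Finset.sum_filter]
    congr 1
    ext x
    rw [Measure.dirac_apply' x hs]
    by_cases hxs : x ∈ s <;> simp [hxs]
  -- repackage with multiplicities
  obtain ⟨n, f, hf⟩ := stmt9_aux T m (fun x => Measure.dirac x)
  refine ⟨n, f, ?_⟩
  rw [hf, hdecomp]
  rw [Finset.smul_sum]
  apply Finset.sum_congr rfl
  intro x _
  rw [hsing x, ← smul_smul, ← Nat.cast_smul_eq_nsmul ℝ≥0∞ (m x)]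
end
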